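/- Let n ≥ 5, a ∈ ℝ with a > 0, and A ∈ ℝ. Let h(x) = a|x|^{4-n} + A for x ∈ ℝ^n \ {0}. Then the Pohozaev boundary integral P(γ) = ∫_{|x|=γ} [ ((n-4)/2)(h ∂_ν(Δh) − Δh ∂_ν h) + (x·∇h)∂_ν(Δh) − ∂_ν(x·∇h)Δh + (1/2)(Δh)^2 x·ν ] ds satisfies lim_{γ → 0^+} P(γ) = (n-4)^2 (n-2) a A |S^{n-1}|, where |S^{n-1}| is the surface area of the unit sphere in ℝ^n. -/

import Mathlib

open scoped RealInnerProductSpace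
open MeasureTheory Metric

/-- The Euclidean Laplacian of a real-valued function on `ℝⁿ`. -/
noncomputable def laplacian {n : ℕ} (f : EuclideanSpace ℝ (Fin n) → ℝ)
    (x : EuclideanSpace ℝ (Fin n)) : ℝ :=
  ∑ i : Fin n, iteratedFDeriv ℝ 2 f x ![EuclideanSpace.single i 1, EuclideanSpace.single i 1]

/-- The normal derivative `∂_ν f (x) = df_x(x/‖x‖)` with respect to the outward normal of the
sphere centered at the origin through `x`. -/
noncomputable def normalDeriv {n : ℕ} (f : EuclideanSpace ℝ (Fin n) → ℝ)
    (x : EuclideanSpace ℝ (Fin n)) : ℝ :=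
  fderiv ℝ f x (‖x‖⁻¹ • x)

/-- The Pohozaev boundary integrand for a function `h`. -/
noncomputable def pohozaevIntegrand {n : ℕ} (h : EuclideanSpace ℝ (Fin n) → ℝ)
    (x : EuclideanSpace ℝ (Fin n)) : ℝ :=
  (((n : ℝ) - 4) / 2) * (h x * normalDeriv (laplacian h) x - laplacian h x * normalDeriv h x)
    + ⟪x, gradient h x⟫ * normalDeriv (laplacian h) x
    - normalDeriv (fun z => ⟪z, gradient h z⟫) x * laplacian h x
    + (1 / 2) * (laplacian h x) ^ 2 * ⟪x, ‖x‖⁻¹ • x⟫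

section Aux

lemma phi_hasFDerivAt {n : ℕ} (c : ℝ) (x : EuclideanSpace ℝ (Fin n)) (hx : x ≠ 0) :
    HasFDerivAt (fun y : EuclideanSpace ℝ (Fin n) => ((‖y‖ : ℝ) ^ 2) ^ c)
      ((2 * c * ((‖x‖ : ℝ) ^ 2) ^ (c - 1)) • innerSL ℝ x) x := by
  have h1 : HasFDerivAt (fun y : EuclideanSpace ℝ (Fin n) => (‖y‖ : ℝ) ^ 2)
      (2 • innerSL ℝ x) x := (hasStrictFDerivAt_norm_sq x).hasFDerivAt
  have h2 := h1.rpow_const (p := c)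
    (Or.inl (pow_ne_zero 2 (norm_ne_zero_iff.mpr hx)))
  refine h2.congr_fderiv ?_
  ext y
  simp
  ring

lemma master_hasFDerivAt {n : ℕ} (b c A' : ℝ) (g : EuclideanSpace ℝ (Fin n) → ℝ)
    (hg : ∀ y : EuclideanSpace ℝ (Fin n), y ≠ 0 → g y = b * ((‖y‖ : ℝ) ^ 2) ^ c + A')
    (x : EuclideanSpace ℝ (Fin n)) (hx : x ≠ 0) :
    HasFDerivAt g ((2 * b * c * ((‖x‖ : ℝ) ^ 2) ^ (c - 1)) • innerSL ℝ x) x := by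
  have hev : g =ᶠ[nhds x] (fun y => b * ((‖y‖ : ℝ) ^ 2) ^ c + A') := by
    filter_upwards [IsOpen.mem_nhds isOpen_compl_singleton hx] with y hy
    exact hg y hy
  have hH := ((phi_hasFDerivAt c x hx).const_mul b).add_const A'
  have := hH.congr_of_eventuallyEq hev
  refine this.congr_fderiv ?_
  ext y
  simp
  ring

lemma master_normalDeriv {n : ℕ} (b c A' : ℝ) (g : EuclideanSpace ℝ (Fin n) → ℝ)
    (hg : ∀ y : EuclideanSpace ℝ (Fin n), y ≠ 0 → g y = b * ((‖y‖ : ℝ) ^ 2) ^ c + A')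
    (x : EuclideanSpace ℝ (Fin n)) (hx : x ≠ 0) :
    normalDeriv g x = 2 * b * c * ((‖x‖ : ℝ) ^ 2) ^ (c - 1) * ‖x‖ := by
  rw [normalDeriv, (master_hasFDerivAt b c A' g hg x hx).fderiv]
  have hn : (‖x‖ : ℝ) ≠ 0 := norm_ne_zero_iff.mpr hx
  have hsum : (∑ i, x i * x i) = (‖x‖ : ℝ) ^ 2 := by
    rw [EuclideanSpace.norm_eq, Real.sq_sqrt (by positivity)]
    exact Finset.sum_congr rfl fun i _ => by rw [Real.norm_eq_abs, sq_abs, sq]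
  simp [real_inner_smul_right, real_inner_self_eq_norm_sq]
  field_simp

lemma master_gradient {n : ℕ} (b c A' : ℝ) (g : EuclideanSpace ℝ (Fin n) → ℝ)
    (hg : ∀ y : EuclideanSpace ℝ (Fin n), y ≠ 0 → g y = b * ((‖y‖ : ℝ) ^ 2) ^ c + A')
    (x : EuclideanSpace ℝ (Fin n)) (hx : x ≠ 0) :
    gradient g x = (2 * b * c * ((‖x‖ : ℝ) ^ 2) ^ (c - 1)) • x := by
  have key : (2 * b * c * ((‖x‖ : ℝ) ^ 2) ^ (c - 1)) • innerSL ℝ x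
      = InnerProductSpace.toDual ℝ (EuclideanSpace ℝ (Fin n))
          ((2 * b * c * ((‖x‖ : ℝ) ^ 2) ^ (c - 1)) • x) := by
    ext y
    simp [InnerProductSpace.toDual_apply_apply, inner_smul_left]
  rw [gradient, (master_hasFDerivAt b c A' g hg x hx).fderiv, key,
    LinearIsometryEquiv.symm_apply_apply]

lemma master_laplacian {n : ℕ} (b c A' : ℝ) (g : EuclideanSpace ℝ (Fin n) → ℝ)
    (hg : ∀ y : EuclideanSpace ℝ (Fin n), y ≠ 0 → g y = b * ((‖y‖ : ℝ) ^ 2) ^ c + A')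
    (x : EuclideanSpace ℝ (Fin n)) (hx : x ≠ 0) :
    laplacian g x = 2 * b * c * (2 * c + (n : ℝ) - 2) * ((‖x‖ : ℝ) ^ 2) ^ (c - 1) := by
  have hn : (‖x‖ : ℝ) ≠ 0 := norm_ne_zero_iff.mpr hx
  have ht : ((‖x‖ : ℝ) ^ 2) ≠ 0 := pow_ne_zero 2 hn
  have hfd : fderiv ℝ g =ᶠ[nhds x]
      (fun y => (2 * b * c * ((‖y‖ : ℝ) ^ 2) ^ (c - 1)) • innerSL ℝ y) := by
    filter_upwards [IsOpen.mem_nhds isOpen_compl_singleton hx] with y hy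
    exact (master_hasFDerivAt b c A' g hg y hy).fderiv
  have hs : HasFDerivAt (fun y : EuclideanSpace ℝ (Fin n) => 2 * b * c * ((‖y‖ : ℝ) ^ 2) ^ (c - 1))
      ((2 * b * c) • ((2 * (c - 1) * ((‖x‖ : ℝ) ^ 2) ^ (c - 1 - 1)) • innerSL ℝ x)) x :=
    (phi_hasFDerivAt (c - 1) x hx).const_mul (2 * b * c)
  have hG : HasFDerivAt (fun y : EuclideanSpace ℝ (Fin n) => innerSL ℝ y) (innerSL ℝ) x :=
    (innerSL ℝ).hasFDerivAt
  have hF := hs.smul hG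
  have h2 := (hfd.fderiv_eq).trans hF.fderiv
  unfold laplacian
  simp only [iteratedFDeriv_two_apply, Matrix.cons_val_zero, Matrix.cons_val_one,
    Matrix.head_cons, h2]
  simp only [ContinuousLinearMap.add_apply, ContinuousLinearMap.smul_apply,
    ContinuousLinearMap.smulRight_apply, ContinuousLinearMap.coe_smul', Pi.smul_apply,
    innerSL_apply_apply, smul_eq_mul, EuclideanSpace.inner_single_left,
    EuclideanSpace.inner_single_right, EuclideanSpace.single_apply, map_one, one_mul,
    RCLike.inner_apply, starRingEnd_apply, star_trivial]
  have hsum : (∑ i, x i * x i) = (‖x‖ : ℝ) ^ 2 := by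
    rw [EuclideanSpace.norm_eq, Real.sq_sqrt (by positivity)]
    exact Finset.sum_congr rfl fun i _ => by rw [Real.norm_eq_abs, sq_abs, sq]
  have hw : ((‖x‖ : ℝ) ^ 2) ^ (c - 1 - 1) * ((‖x‖ : ℝ) ^ 2) = ((‖x‖ : ℝ) ^ 2) ^ (c - 1) := by
    rw [← Real.rpow_add_one ht (c - 1 - 1)]
    ring_nf
  have hone : ∀ i : Fin n, (innerSL ℝ (EuclideanSpace.single i (1:ℝ))) (EuclideanSpace.single i 1) = 1 :=
    fun i => by simp
  simp only [hone, mul_one]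
  rw [Finset.sum_add_distrib, Finset.sum_const, Finset.card_univ, Fintype.card_fin,
    nsmul_eq_mul]
  have h3 : (∑ i : Fin n, 2 * b * c * (2 * (c - 1) * ((‖x‖ : ℝ) ^ 2) ^ (c - 1 - 1) * x i) * x i)
      = 2 * b * c * (2 * (c - 1)) * (((‖x‖ : ℝ) ^ 2) ^ (c - 1 - 1) * ∑ i, x i * x i) := by
    rw [Finset.mul_sum, Finset.mul_sum]
    refine Finset.sum_congr rfl fun i _ => ?_
    ring
  rw [h3, hsum, hw]
  ring

lemma pohozaev_eval {n : ℕ} (a A : ℝ) (h : EuclideanSpace ℝ (Fin n) → ℝ)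
    (hh : ∀ x : EuclideanSpace ℝ (Fin n), x ≠ 0 → h x = a * ‖x‖ ^ (4 - (n : ℝ)) + A)
    (x : EuclideanSpace ℝ (Fin n)) (hx : x ≠ 0) :
    pohozaevIntegrand h x = ((n : ℝ) - 4) ^ 2 * ((n : ℝ) - 2) * a * A
      * (((‖x‖ : ℝ) ^ 2) ^ ((4 - (n : ℝ)) / 2 - 2) * ‖x‖) := by
  set c : ℝ := (4 - (n : ℝ)) / 2 with hc
  have hpow : ∀ y : EuclideanSpace ℝ (Fin n), ((‖y‖ : ℝ) ^ 2) ^ c = ‖y‖ ^ (4 - (n : ℝ)) := by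
    intro y
    rw [← Real.rpow_natCast ‖y‖ 2, ← Real.rpow_mul (norm_nonneg y)]
    rw [hc]
    norm_num
    congr 1
    ring
  have hh' : ∀ y : EuclideanSpace ℝ (Fin n), y ≠ 0 → h y = a * ((‖y‖ : ℝ) ^ 2) ^ c + A := by
    intro y hy; rw [hh y hy, hpow]
  have hn : (‖x‖ : ℝ) ≠ 0 := norm_ne_zero_iff.mpr hx
  have ht : ((‖x‖ : ℝ) ^ 2) ≠ 0 := pow_ne_zero 2 hn
  have hlapfun : ∀ y : EuclideanSpace ℝ (Fin n), y ≠ 0 →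
      laplacian h y = (2 * a * c * (2 * c + (n : ℝ) - 2)) * ((‖y‖ : ℝ) ^ 2) ^ (c - 1) + 0 := by
    intro y hy
    rw [master_laplacian a c A h hh' y hy, add_zero]
  have hGfun : ∀ y : EuclideanSpace ℝ (Fin n), y ≠ 0 →
      ⟪y, gradient h y⟫ = (2 * a * c) * ((‖y‖ : ℝ) ^ 2) ^ c + 0 := by
    intro y hy
    have hty : ((‖y‖ : ℝ) ^ 2) ≠ 0 := pow_ne_zero 2 (norm_ne_zero_iff.mpr hy)
    rw [master_gradient a c A h hh' y hy, real_inner_smul_right, real_inner_self_eq_norm_sq,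
      add_zero, mul_assoc, ← Real.rpow_add_one hty (c - 1)]
    ring_nf
  have e1 : normalDeriv h x = 2 * a * c * ((‖x‖ : ℝ) ^ 2) ^ (c - 1) * ‖x‖ :=
    master_normalDeriv a c A h hh' x hx
  have e2 : laplacian h x = 2 * a * c * (2 * c + (n : ℝ) - 2) * ((‖x‖ : ℝ) ^ 2) ^ (c - 1) :=
    master_laplacian a c A h hh' x hx
  have e3 : normalDeriv (laplacian h) x
      = 2 * (2 * a * c * (2 * c + (n : ℝ) - 2)) * (c - 1) * ((‖x‖ : ℝ) ^ 2) ^ (c - 1 - 1) * ‖x‖ :=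
    master_normalDeriv _ _ _ _ hlapfun x hx
  have e4 : normalDeriv (fun z : EuclideanSpace ℝ (Fin n) => ⟪z, gradient h z⟫) x
      = 2 * (2 * a * c) * c * ((‖x‖ : ℝ) ^ 2) ^ (c - 1) * ‖x‖ :=
    master_normalDeriv _ _ _ _ hGfun x hx
  have e5 : ⟪x, gradient h x⟫ = (2 * a * c) * ((‖x‖ : ℝ) ^ 2) ^ c + 0 := hGfun x hx
  have e6 : h x = a * ((‖x‖ : ℝ) ^ 2) ^ c + A := hh' x hx
  have e7 : ⟪x, (‖x‖ : ℝ)⁻¹ • x⟫ = ‖x‖ := by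
    rw [real_inner_smul_right, real_inner_self_eq_norm_sq]
    field_simp
  have p1 : ((‖x‖ : ℝ) ^ 2) ^ (c - 1) = ((‖x‖ : ℝ) ^ 2) ^ (c - 1 - 1) * ‖x‖ ^ 2 := by
    rw [← Real.rpow_add_one ht (c - 1 - 1)]
    ring_nf
  have p2 : ((‖x‖ : ℝ) ^ 2) ^ c = ((‖x‖ : ℝ) ^ 2) ^ (c - 1) * ‖x‖ ^ 2 := by
    rw [← Real.rpow_add_one ht (c - 1)]
    ring_nf
  rw [pohozaevIntegrand, e1, e2, e3, e4, e5, e6, e7]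
  rw [show (4 - (n : ℝ)) / 2 - 2 = c - 1 - 1 by rw [hc]; ring]
  rw [p2, p1, hc]
  ring

end Aux

theorem stmt_10 (n : ℕ) (hn : 5 ≤ n) (a A : ℝ) (ha : 0 < a)
    (h : EuclideanSpace ℝ (Fin n) → ℝ)
    (hh : ∀ x : EuclideanSpace ℝ (Fin n), x ≠ 0 → h x = a * ‖x‖ ^ (4 - (n : ℝ)) + A)
    (P : ℝ → ℝ)
    (hP : ∀ γ : ℝ, 0 < γ → P γ
      = γ ^ ((n : ℝ) - 1) * ∫ ω : sphere (0 : EuclideanSpace ℝ (Fin n)) 1,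
          pohozaevIntegrand h (γ • (ω : EuclideanSpace ℝ (Fin n)))
          ∂((volume : Measure (EuclideanSpace ℝ (Fin n))).toSphere)) :
    Filter.Tendsto P (nhdsWithin 0 (Set.Ioi 0))
      (nhds (((n : ℝ) - 4) ^ 2 * ((n : ℝ) - 2) * a * A
        * (((volume : Measure (EuclideanSpace ℝ (Fin n))).toSphere Set.univ).toReal))) := by
  set T : ℝ := ((volume : Measure (EuclideanSpace ℝ (Fin n))).toSphere Set.univ).toReal with hT
  have hconst : ∀ γ : ℝ, 0 < γ →
      P γ = ((n : ℝ) - 4) ^ 2 * ((n : ℝ) - 2) * a * A * T := by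
    intro γ hγ
    have hint : ∀ ω : sphere (0 : EuclideanSpace ℝ (Fin n)) 1,
        pohozaevIntegrand h (γ • (ω : EuclideanSpace ℝ (Fin n)))
          = ((n : ℝ) - 4) ^ 2 * ((n : ℝ) - 2) * a * A
              * ((γ ^ 2) ^ ((4 - (n : ℝ)) / 2 - 2) * γ) := by
      intro ω
      have hω : ‖(ω : EuclideanSpace ℝ (Fin n))‖ = 1 := by
        exact mem_sphere_zero_iff_norm.mp ω.2
      have hωne : (ω : EuclideanSpace ℝ (Fin n)) ≠ 0 := by
        intro h0
        rw [h0] at hω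
        simp at hω
      have hxne : γ • (ω : EuclideanSpace ℝ (Fin n)) ≠ 0 := smul_ne_zero hγ.ne' hωne
      have hnorm : ‖γ • (ω : EuclideanSpace ℝ (Fin n))‖ = γ := by
        rw [norm_smul, hω, Real.norm_eq_abs, abs_of_pos hγ, mul_one]
      rw [pohozaev_eval a A h hh _ hxne, hnorm]
    have hγpow : γ ^ ((n : ℝ) - 1) * ((γ ^ 2) ^ ((4 - (n : ℝ)) / 2 - 2) * γ) = 1 := by
      rw [← Real.rpow_natCast γ 2, ← Real.rpow_mul hγ.le]
      nth_rewrite 3 [← Real.rpow_one γ]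
      rw [← Real.rpow_add hγ, ← Real.rpow_add hγ]
      norm_num
      rw [show (n : ℝ) + 2 * ((4 - (n : ℝ)) / 2 - 2) = 0 by ring, Real.rpow_zero]
    rw [hP γ hγ, integral_congr_ae (Filter.Eventually.of_forall hint), integral_const,
      smul_eq_mul]
    rw [measureReal_def, ← hT]
    linear_combination (((n : ℝ) - 4) ^ 2 * ((n : ℝ) - 2) * a * A * T) * hγpow
  refine Filter.Tendsto.congr' ?_ tendsto_const_nhds
  filter_upwards [self_mem_nhdsWithin] with γ hγ
  exact (hconst γ hγ).symm
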